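/- Let (Ω, F, P) be a probability space and let (ℱ_n)_{n≥1} be an increasing sequence of sub-σ-algebras of F. For each n ≥ 1 let X_n : Ω → ℝ be an ℱ_n-measurable random variable, let T_n : Ω → ℝ be an ℱ_n-measurable random variable, and let W_n : Ω → ℝ be an ℱ_{n+1}-measurable random variable such that X_{n+1}(ω) = T_n(ω) + W_n(ω) for all ω. Assume E[W_n | ℱ_n] = 0 almost surely for every n, and Σ_{n=1}^∞ E[W_n²] < ∞. Let α_n, β_n, γ_n : Ω → ℝ be nonnegative functions such that almost surely α_n(ω) → 0, almost surely Σ_n β_n(ω) < ∞, and almost surely Σ_n γ_n(ω) = ∞. Suppose there is a point x* ∈ ℝ such that for every n and almost every ω, |T_n(ω) − x*| ≤ max(α_n(ω), (1 + β_n(ω))|X_n(ω) − x*| − γ_n(ω)). Then X_n converges to x* almost surely. -/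

import Mathlib

open MeasureTheory Filter Topology

private lemma abs_add_le_max_sign (a b : ℝ) :
    |a + b| ≤ max (|a| + (if 0 ≤ a then (1:ℝ) else -1) * b) |b| := by
  rcases le_or_gt 0 a with ha | ha
  · simp only [if_pos ha]
    rcases le_or_gt 0 (a + b) with h | h
    · exact le_max_of_le_left (by rw [abs_of_nonneg h, abs_of_nonneg ha]; ring_nf; rfl)
    · refine le_max_of_le_right ?_
      rw [abs_of_neg h]
      have hb : b < 0 := by linarith
      rw [abs_of_neg hb]; linarith
  · simp only [if_neg (not_le.mpr ha)]
    rcases le_or_gt (a + b) 0 with h | h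
    · exact le_max_of_le_left (by rw [abs_of_nonpos h, abs_of_neg ha]; ring_nf; rfl)
    · refine le_max_of_le_right ?_
      have hb : 0 < b := by linarith
      rw [abs_of_pos h, abs_of_pos hb]; linarith

private lemma integrable_mul_of_memL2 {Ω : Type*} {m : MeasurableSpace Ω} {μ : Measure Ω}
    {f g : Ω → ℝ} (hf : MemLp f 2 μ) (hg : MemLp g 2 μ) :
    Integrable (fun ω => f ω * g ω) μ := by
  refine Integrable.mono' ((hf.integrable_sq.add hg.integrable_sq).div_const 2)
    (hf.aestronglyMeasurable.mul hg.aestronglyMeasurable) ?_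
  filter_upwards with ω
  simp only [Pi.add_apply]
  rw [Real.norm_eq_abs, abs_mul]
  have h1 := abs_nonneg (f ω)
  have h2 := abs_nonneg (g ω)
  have h3 := sq_abs (f ω)
  have h4 := sq_abs (g ω)
  nlinarith [sq_nonneg (|f ω| - |g ω|)]
private lemma dvoretzky_det (e u α β γ v : ℕ → ℝ)
    (he0 : ∀ n, 0 ≤ e n) (hβ0 : ∀ n, 0 ≤ β n) (hγ0 : ∀ n, 0 ≤ γ n)
    (hα : Tendsto α atTop (𝓝 0))
    (hβ : Summable β)
    (hγ : Tendsto (fun n => ∑ k ∈ Finset.range n, γ k) atTop atTop)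
    (hu : CauchySeq (fun n => ∑ k ∈ Finset.range n, u k))
    (hv : Tendsto v atTop (𝓝 0))
    (hrec : ∀ n, e (n + 1) ≤ max (max (α n + u n) ((1 + β n) * e n - γ n + u n)) (v n)) :
    Tendsto e atTop (𝓝 0) := by
  rw [Metric.tendsto_atTop]
  intro δ hδ
  set ε : ℝ := min (δ / 16) (1 / 3) with hεdef
  have hε : 0 < ε := lt_min (by linarith) (by norm_num)
  have hε3 : ε ≤ 1 / 3 := min_le_right _ _
  have hεδ : 15 * ε < δ := by
    have h1 : ε ≤ δ / 16 := min_le_left _ _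
    nlinarith
  obtain ⟨N₁, hN₁⟩ := (Metric.tendsto_atTop.mp hα ε hε)
  obtain ⟨N₂, hN₂⟩ := (Metric.tendsto_atTop.mp hv ε hε)
  have hβc : CauchySeq (fun n => ∑ k ∈ Finset.range n, β k) := hβ.hasSum.tendsto_sum_nat.cauchySeq
  obtain ⟨N₃, hN₃⟩ := Metric.cauchySeq_iff.mp hβc ε hε
  obtain ⟨N₄, hN₄⟩ := Metric.cauchySeq_iff.mp hu ε hε
  set N : ℕ := max (max N₁ N₂) (max N₃ N₄) with hNdef
  have hα' : ∀ n, N ≤ n → α n ≤ ε := by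
    intro n hn
    have := hN₁ n (by omega)
    rw [Real.dist_eq, sub_zero] at this
    exact le_of_lt (lt_of_le_of_lt (le_abs_self _) this)
  have hv' : ∀ n, N ≤ n → v n ≤ ε := by
    intro n hn
    have := hN₂ n (by omega)
    rw [Real.dist_eq, sub_zero] at this
    exact le_of_lt (lt_of_le_of_lt (le_abs_self _) this)
  have hβ' : ∀ n m, N ≤ n → n ≤ m → ∑ k ∈ Finset.Ico n m, β k ≤ ε := by
    intro n m hn hnm
    have h := hN₃ m (by omega) n (by omega)
    rw [Real.dist_eq] at h
    rw [Finset.sum_Ico_eq_sub _ hnm]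
    exact le_of_lt (lt_of_le_of_lt (le_abs_self _) h)
  have hu' : ∀ n m, N ≤ n → n ≤ m → |∑ k ∈ Finset.Ico n m, u k| ≤ ε := by
    intro n m hn hnm
    have h := hN₄ m (by omega) n (by omega)
    rw [Real.dist_eq] at h
    rw [Finset.sum_Ico_eq_sub _ hnm]
    exact le_of_lt h
  have hu1 : ∀ n, N ≤ n → |u n| ≤ ε := by
    intro n hn
    have h := hu' n (n + 1) hn (by omega)
    rwa [show Finset.Ico n (n + 1) = {n} by rw [Finset.Ico_add_one_right_eq_Icc, Finset.Icc_self],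
      Finset.sum_singleton] at h
  -- key excursion bound
  have key : ∀ p m, N ≤ p → p ≤ m →
      (∀ j, p ≤ j → j < m → e (j + 1) ≤ (1 + β j) * e j - γ j + u j) →
      (∀ j, p ≤ j → j ≤ m → e j ≤ 3 * e p + 6 * ε) ∧
        e m ≤ 2 * e p + 3 * ε - ∑ k ∈ Finset.Ico p m, γ k := by
    intro p m hNp hpm hstep
    have hunroll : ∀ j, p ≤ j → j ≤ m →
        e j ≤ e p + ((∑ k ∈ Finset.Ico p j, β k * e k) - (∑ k ∈ Finset.Ico p j, γ k)
          + ∑ k ∈ Finset.Ico p j, u k) := by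
      intro j hpj
      induction j, hpj using Nat.le_induction with
      | base => intro _; simp
      | succ j hpj ih =>
        intro hjm
        have h1 := hstep j hpj (by omega)
        have h2 := ih (by omega)
        rw [Finset.sum_Ico_succ_top hpj, Finset.sum_Ico_succ_top hpj, Finset.sum_Ico_succ_top hpj]
        have hexp : (1 + β j) * e j = e j + β j * e j := by ring
        linarith
    set M : ℝ := 3 * e p + 6 * ε with hMdef
    have hM0 : 0 ≤ M := by have := he0 p; positivity
    have hbd : ∀ j, p ≤ j → j ≤ m → ∀ k, p ≤ k → k ≤ j → e k ≤ M := by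
      intro j hpj
      induction j, hpj using Nat.le_induction with
      | base =>
        intro _ k hk1 hk2
        have : k = p := le_antisymm hk2 hk1
        subst this
        have := he0 k; simp only [hMdef]; linarith
      | succ j hpj ih =>
        intro hjm k hk1 hk2
        have hnew : e (j + 1) ≤ M := by
          have hun := hunroll (j + 1) (by omega) hjm
          have hsum1 : ∑ i ∈ Finset.Ico p (j + 1), β i * e i ≤ ε * M := by
            calc ∑ i ∈ Finset.Ico p (j + 1), β i * e i
                ≤ ∑ i ∈ Finset.Ico p (j + 1), β i * M := by
                  refine Finset.sum_le_sum fun i hi => ?_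
                  rw [Finset.mem_Ico] at hi
                  exact mul_le_mul_of_nonneg_left
                    (ih (by omega) i hi.1 (by omega)) (hβ0 i)
              _ = (∑ i ∈ Finset.Ico p (j + 1), β i) * M := by rw [Finset.sum_mul]
              _ ≤ ε * M := mul_le_mul_of_nonneg_right (hβ' p (j + 1) hNp (by omega)) hM0
          have hsum2 : 0 ≤ ∑ i ∈ Finset.Ico p (j + 1), γ i :=
            Finset.sum_nonneg fun i _ => hγ0 i
          have hsum3 : ∑ i ∈ Finset.Ico p (j + 1), u i ≤ ε :=
            le_trans (le_abs_self _) (hu' p (j + 1) hNp (by omega))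
          have hεM : ε * M ≤ (1 / 3) * M := mul_le_mul_of_nonneg_right hε3 hM0
          have hep := he0 p
          simp only [hMdef] at *
          linarith
        rcases Nat.lt_succ_iff_lt_or_eq.mp (Nat.lt_succ_of_le hk2) with hk | hk
        · exact ih (by omega) k hk1 (by omega)
        · rw [hk]; exact hnew
    refine ⟨fun j h1 h2 => hbd m hpm le_rfl j h1 h2, ?_⟩
    have hun := hunroll m hpm le_rfl
    have hsum1 : ∑ i ∈ Finset.Ico p m, β i * e i ≤ ε * M := by
      calc ∑ i ∈ Finset.Ico p m, β i * e i ≤ ∑ i ∈ Finset.Ico p m, β i * M := by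
            refine Finset.sum_le_sum fun i hi => ?_
            rw [Finset.mem_Ico] at hi
            exact mul_le_mul_of_nonneg_left (hbd m hpm le_rfl i hi.1 (by omega)) (hβ0 i)
        _ = (∑ i ∈ Finset.Ico p m, β i) * M := by rw [Finset.sum_mul]
        _ ≤ ε * M := mul_le_mul_of_nonneg_right (hβ' p m hNp hpm) hM0
    have hsum3 : ∑ i ∈ Finset.Ico p m, u i ≤ ε :=
      le_trans (le_abs_self _) (hu' p m hNp hpm)
    have hεM : ε * M ≤ (1 / 3) * M := mul_le_mul_of_nonneg_right hε3 hM0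
    have hep := he0 p
    simp only [hMdef] at *
    linarith
  -- Claim 1 : e gets small
  have claim1 : ∃ n, N ≤ n ∧ e n ≤ 3 * ε := by
    by_contra hcon
    push_neg at hcon
    have hstep : ∀ j, N ≤ j → e (j + 1) ≤ (1 + β j) * e j - γ j + u j := by
      intro j hj
      rcases le_max_iff.mp (hrec j) with h' | h'
      · rcases le_max_iff.mp h' with h'' | h''
        · exfalso
          have h1 := hcon (j + 1) (by omega)
          have h2 := hα' j hj
          have h3 := abs_le.mp (hu1 j hj)
          linarith
        · exact h''
      · exfalso
        have h1 := hcon (j + 1) (by omega)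
        have h2 := hv' j hj
        linarith
    obtain ⟨m, hm1, hm2⟩ :=
      (((hγ.eventually_ge_atTop ((∑ k ∈ Finset.range N, γ k) + 2 * e N + 1)).and
        (eventually_ge_atTop N)).exists)
    have hk := (key N m le_rfl hm2 (fun j hj _ => hstep j hj)).2
    rw [Finset.sum_Ico_eq_sub _ hm2] at hk
    have h1 := hcon m hm2
    have hεle : ε ≤ 1 / 3 := hε3
    linarith
  obtain ⟨n₀, hn₀N, hn₀⟩ := claim1
  -- Claim 2 : e stays small
  have inv : ∀ m, n₀ ≤ m → ∃ p, n₀ ≤ p ∧ p ≤ m ∧ e p ≤ 3 * ε ∧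
      ∀ j, p ≤ j → j < m → e (j + 1) ≤ (1 + β j) * e j - γ j + u j := by
    intro m hm
    induction m, hm using Nat.le_induction with
    | base => exact ⟨n₀, le_rfl, le_rfl, hn₀, fun j h1 h2 => absurd h2 (by omega)⟩
    | succ m hm ih =>
      obtain ⟨p, hp1, hp2, hp3, hp4⟩ := ih
      have hmN : N ≤ m := le_trans hn₀N hm
      rcases le_max_iff.mp (hrec m) with h' | h'
      · rcases le_max_iff.mp h' with h'' | h''
        · refine ⟨m + 1, by omega, le_rfl, ?_, fun j h1 h2 => absurd h2 (by omega)⟩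
          have h2 := hα' m hmN
          have h3 := abs_le.mp (hu1 m hmN)
          linarith
        · refine ⟨p, hp1, by omega, hp3, fun j h1 h2 => ?_⟩
          rcases Nat.lt_succ_iff_lt_or_eq.mp h2 with h | h
          · exact hp4 j h1 h
          · subst h; exact h''
      · refine ⟨m + 1, by omega, le_rfl, ?_, fun j h1 h2 => absurd h2 (by omega)⟩
        have h2 := hv' m hmN
        linarith
  refine ⟨n₀, fun m hm => ?_⟩
  obtain ⟨p, hp1, hp2, hp3, hp4⟩ := inv m hm
  have h := (key p m (le_trans hn₀N hp1) hp2 hp4).1 m hp2 le_rfl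
  rw [Real.dist_eq, sub_zero, abs_of_nonneg (he0 m)]
  linarith

/-- **Extended Dvoretzky theorem**: the operator `T n` is an `ℱ n`-measurable random
variable and the bounding sequences `α, β, γ` are nonnegative random functions whose
convergence/divergence conditions hold almost surely. -/
theorem dvoretzky_extended
    {Ω : Type*} {mΩ : MeasurableSpace Ω} (μ : Measure Ω) [IsProbabilityMeasure μ]
    (ℱ : Filtration ℕ mΩ)
    (X : ℕ → Ω → ℝ) (hX : Adapted ℱ X)
    (T : ℕ → Ω → ℝ) (hT : ∀ n, Measurable[ℱ n] (T n))
    (W : ℕ → Ω → ℝ) (hW : ∀ n, Measurable[ℱ (n + 1)] (W n))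
    (hrec : ∀ n ω, X (n + 1) ω = T n ω + W n ω)
    (hcond : ∀ n, μ[W n | ℱ n] =ᵐ[μ] 0)
    (hvar : ∑' n, ∫⁻ ω, ENNReal.ofReal ((W n ω) ^ 2) ∂μ < ⊤)
    (α β γ : ℕ → Ω → ℝ)
    (hα0 : ∀ n ω, 0 ≤ α n ω) (hβ0 : ∀ n ω, 0 ≤ β n ω) (hγ0 : ∀ n ω, 0 ≤ γ n ω)
    (hα : ∀ᵐ ω ∂μ, Tendsto (fun n => α n ω) atTop (𝓝 0))
    (hβ : ∀ᵐ ω ∂μ, Summable (fun n => β n ω))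
    (hγ : ∀ᵐ ω ∂μ, Tendsto (fun n => ∑ k ∈ Finset.range n, γ k ω) atTop atTop)
    (xstar : ℝ)
    (hbound : ∀ n, ∀ᵐ ω ∂μ,
      |T n ω - xstar| ≤ max (α n ω) ((1 + β n ω) * |X n ω - xstar| - γ n ω)) :
    ∀ᵐ ω ∂μ, Tendsto (fun n => X n ω) atTop (𝓝 xstar) := by
  classical
  have hWm : ∀ n, Measurable (W n) := fun n => (hW n).mono (ℱ.le _) le_rfl
  have hvarn : ∀ n, ∫⁻ ω, ENNReal.ofReal (W n ω ^ 2) ∂μ ≠ ⊤ := fun n =>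
    (ENNReal.lt_top_of_tsum_ne_top hvar.ne n).ne
  -- W n is in L²
  have hW2 : ∀ n, MemLp (W n) 2 μ := by
    intro n
    rw [memLp_two_iff_integrable_sq (hWm n).aestronglyMeasurable]
    refine ⟨((hWm n).pow_const 2).aestronglyMeasurable, ?_⟩
    rw [hasFiniteIntegral_iff_norm]
    have heq : ∀ ω, ENNReal.ofReal ‖W n ω ^ 2‖ = ENNReal.ofReal (W n ω ^ 2) := fun ω => by
      rw [Real.norm_eq_abs, abs_of_nonneg (sq_nonneg _)]
    simp_rw [heq]
    exact lt_top_iff_ne_top.mpr (hvarn n)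
  have hWint : ∀ n, Integrable (W n) μ := fun n => (hW2 n).integrable one_le_two
  have hWsq_int : ∀ n, Integrable (fun ω => W n ω ^ 2) μ := fun n => (hW2 n).integrable_sq
  -- the predictable sign sequence
  set H : ℕ → Ω → ℝ := fun n ω => if 0 ≤ T n ω - xstar then 1 else -1 with hHdef
  have hHsm : ∀ n, StronglyMeasurable[ℱ n] (H n) := by
    intro n
    refine (Measurable.ite ?_ measurable_const measurable_const).stronglyMeasurable
    exact measurableSet_le measurable_const ((hT n).sub measurable_const)
  have hHm : ∀ n, Measurable (H n) := fun n => ((hHsm n).measurable).mono (ℱ.le n) le_rfl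
  have hHnorm : ∀ n ω, ‖H n ω‖ = 1 := by
    intro n ω
    simp only [hHdef]
    split_ifs <;> norm_num
  have hHsq : ∀ n ω, H n ω ^ 2 = 1 := by
    intro n ω
    simp only [hHdef]
    split_ifs <;> norm_num
  -- the martingale differences U n = H n * W n
  set U : ℕ → Ω → ℝ := fun n ω => H n ω * W n ω with hUdef
  have hUm : ∀ n, Measurable (U n) := fun n => (hHm n).mul (hWm n)
  have hU2 : ∀ n, MemLp (U n) 2 μ := by
    intro n
    refine (hW2 n).of_le (hUm n).aestronglyMeasurable ?_
    filter_upwards with ω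
    simp only [hUdef, norm_mul, hHnorm n ω, one_mul, le_refl]
  have hUint : ∀ n, Integrable (U n) μ := fun n => (hU2 n).integrable one_le_two
  -- the martingale G
  set G : ℕ → Ω → ℝ := fun n ω => ∑ k ∈ Finset.range n, U k ω with hGdef
  have hGmeas : ∀ n, Measurable[ℱ n] (G n) := by
    intro n
    apply Finset.measurable_sum
    intro k hk
    have hkn := Finset.mem_range.mp hk
    exact (((hHsm k).measurable).mono (ℱ.mono hkn.le) le_rfl).mul
      ((hW k).mono (ℱ.mono hkn) le_rfl)
  have hGadp : StronglyAdapted ℱ G := fun n => (hGmeas n).stronglyMeasurable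
  have hG2 : ∀ n, MemLp (G n) 2 μ := fun n =>
    memLp_finset_sum (Finset.range n) fun k _ => hU2 k
  have hGint : ∀ n, Integrable (G n) μ := fun n => (hG2 n).integrable one_le_two
  have hGsucc : ∀ n, G (n + 1) = G n + U n := by
    intro n
    funext ω
    simp only [hGdef, Pi.add_apply]
    exact Finset.sum_range_succ _ _
  -- conditional expectation of U n vanishes
  have hcondU : ∀ n, μ[U n | ℱ n] =ᵐ[μ] 0 := by
    intro n
    have h1 : μ[H n * W n | ℱ n] =ᵐ[μ] H n * μ[W n | ℱ n] :=
      condExp_mul_of_stronglyMeasurable_left (hHsm n) (hUint n) (hWint n)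
    refine h1.trans ?_
    filter_upwards [hcond n] with ω hω
    simp only [Pi.mul_apply, Pi.zero_apply] at hω ⊢
    rw [hω, mul_zero]
  -- G is a martingale
  have hGmart : Martingale G ℱ μ := by
    refine martingale_nat hGadp hGint fun n => ?_
    rw [hGsucc n]
    refine EventuallyEq.symm ?_
    calc μ[G n + U n|ℱ n] =ᵐ[μ] μ[G n|ℱ n] + μ[U n|ℱ n] := condExp_add (hGint n) (hUint n) _
      _ =ᵐ[μ] G n := by
        rw [condExp_of_stronglyMeasurable (ℱ.le n) (hGadp n) (hGint n)]
        filter_upwards [hcondU n] with ω hω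
        simp only [Pi.add_apply, Pi.zero_apply] at hω ⊢
        rw [hω, add_zero]
  -- orthogonality: cross terms have zero integral
  have hGU_int : ∀ n, Integrable (fun ω => G n ω * U n ω) μ := fun n =>
    integrable_mul_of_memL2 (hG2 n) (hU2 n)
  have hGH2 : ∀ n, MemLp (fun ω => G n ω * H n ω) 2 μ := by
    intro n
    refine (hG2 n).of_le (((hGmeas n).mono (ℱ.le n) le_rfl).mul (hHm n)).aestronglyMeasurable ?_
    filter_upwards with ω
    simp only [norm_mul, hHnorm n ω, mul_one, le_refl]
  have hGHW_int : ∀ n, Integrable ((fun ω => G n ω * H n ω) * W n) μ := fun n =>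
    integrable_mul_of_memL2 (hGH2 n) (hW2 n)
  have hGU_zero : ∀ n, ∫ ω, G n ω * U n ω ∂μ = 0 := by
    intro n
    have hfsm : StronglyMeasurable[ℱ n] (fun ω => G n ω * H n ω) := (hGadp n).mul (hHsm n)
    have hcm : μ[(fun ω => G n ω * H n ω) * W n | ℱ n]
        =ᵐ[μ] (fun ω => G n ω * H n ω) * μ[W n | ℱ n] :=
      condExp_mul_of_stronglyMeasurable_left hfsm (hGHW_int n) (hWint n)
    have hzero : μ[(fun ω => G n ω * H n ω) * W n | ℱ n] =ᵐ[μ] 0 := by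
      refine hcm.trans ?_
      filter_upwards [hcond n] with ω hω
      simp only [Pi.mul_apply, Pi.zero_apply] at hω ⊢
      rw [hω, mul_zero]
    have h1 : ∫ ω, ((fun ω => G n ω * H n ω) * W n) ω ∂μ = 0 := by
      rw [← integral_condExp (ℱ.le n) (f := (fun ω => G n ω * H n ω) * W n)]
      rw [integral_congr_ae hzero]
      simp
    have h2 : ∀ ω, G n ω * U n ω = ((fun ω => G n ω * H n ω) * W n) ω := by
      intro ω
      simp only [hUdef, Pi.mul_apply]
      ring
    rw [integral_congr_ae (Filter.Eventually.of_forall h2)]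
    exact h1
  -- second moment bound by induction
  have hGsq : ∀ n, ∫ ω, G n ω ^ 2 ∂μ ≤ ∑ k ∈ Finset.range n, ∫ ω, W k ω ^ 2 ∂μ := by
    intro n
    induction n with
    | zero => simp [hGdef]
    | succ n ih =>
      have hexp : ∀ ω, G (n + 1) ω ^ 2 = G n ω ^ 2 + (2 * (G n ω * U n ω) + U n ω ^ 2) := by
        intro ω
        rw [hGsucc n]
        simp only [Pi.add_apply]
        ring
      have hUsq_int := (hU2 n).integrable_sq
      have hGsq_int := (hG2 n).integrable_sq
      have h2int : Integrable (fun ω => 2 * (G n ω * U n ω) + U n ω ^ 2) μ :=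
        ((hGU_int n).const_mul 2).add hUsq_int
      have hUWsq : ∫ ω, U n ω ^ 2 ∂μ = ∫ ω, W n ω ^ 2 ∂μ := by
        refine integral_congr_ae (Filter.Eventually.of_forall fun ω => ?_)
        simp only [hUdef]
        rw [mul_pow, hHsq n ω, one_mul]
      calc ∫ ω, G (n + 1) ω ^ 2 ∂μ
          = ∫ ω, (G n ω ^ 2 + (2 * (G n ω * U n ω) + U n ω ^ 2)) ∂μ := by simp_rw [hexp]
        _ = ∫ ω, G n ω ^ 2 ∂μ + ∫ ω, (2 * (G n ω * U n ω) + U n ω ^ 2) ∂μ :=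
            integral_add hGsq_int h2int
        _ = ∫ ω, G n ω ^ 2 ∂μ + (2 * ∫ ω, G n ω * U n ω ∂μ + ∫ ω, U n ω ^ 2 ∂μ) := by
            rw [integral_add ((hGU_int n).const_mul 2) hUsq_int, integral_const_mul 2 _]
        _ = ∫ ω, G n ω ^ 2 ∂μ + ∫ ω, W n ω ^ 2 ∂μ := by rw [hGU_zero n, hUWsq]; ring
        _ ≤ ∑ k ∈ Finset.range (n + 1), ∫ ω, W k ω ^ 2 ∂μ := by
            rw [Finset.sum_range_succ]
            exact add_le_add_left ih _
  -- uniform L¹ bound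
  have hconv : ∀ x : ℝ, ((‖x‖₊ : ENNReal)) ^ (2:ℝ) = ENNReal.ofReal (x ^ 2) := by
    intro x
    rw [show (2:ℝ) = ((2:ℕ):ℝ) by norm_num, ENNReal.rpow_natCast, ← ENNReal.coe_pow,
      ← nnnorm_pow, ← enorm_eq_nnnorm, Real.enorm_eq_ofReal (sq_nonneg x)]
  have hGsq_lin : ∀ n, ∫⁻ ω, (‖G n ω‖₊ : ENNReal) ^ (2:ℝ) ∂μ
      ≤ ∑' k, ∫⁻ ω, ENNReal.ofReal (W k ω ^ 2) ∂μ := by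
    intro n
    simp_rw [hconv]
    rw [← ofReal_integral_eq_lintegral_ofReal (hG2 n).integrable_sq
      (Filter.Eventually.of_forall fun ω => sq_nonneg _)]
    calc ENNReal.ofReal (∫ ω, G n ω ^ 2 ∂μ)
        ≤ ENNReal.ofReal (∑ k ∈ Finset.range n, ∫ ω, W k ω ^ 2 ∂μ) :=
          ENNReal.ofReal_le_ofReal (hGsq n)
      _ = ∑ k ∈ Finset.range n, ENNReal.ofReal (∫ ω, W k ω ^ 2 ∂μ) :=
          ENNReal.ofReal_sum_of_nonneg fun k _ => integral_nonneg fun ω => sq_nonneg _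
      _ = ∑ k ∈ Finset.range n, ∫⁻ ω, ENNReal.ofReal (W k ω ^ 2) ∂μ :=
          Finset.sum_congr rfl fun k _ => ofReal_integral_eq_lintegral_ofReal (hWsq_int k)
            (Filter.Eventually.of_forall fun ω => sq_nonneg _)
      _ ≤ ∑' k, ∫⁻ ω, ENNReal.ofReal (W k ω ^ 2) ∂μ := ENNReal.sum_le_tsum _
  have hVhalf : (∑' k, ∫⁻ ω, ENNReal.ofReal (W k ω ^ 2) ∂μ) ^ (1/2 : ℝ) ≠ ⊤ :=
    ENNReal.rpow_ne_top_of_nonneg (by norm_num) hvar.ne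
  have hbdd : ∀ n, eLpNorm (G n) 1 μ
      ≤ ((∑' k, ∫⁻ ω, ENNReal.ofReal (W k ω ^ 2) ∂μ) ^ (1/2 : ℝ)).toNNReal := by
    intro n
    have h1 : eLpNorm (G n) 1 μ ≤ eLpNorm (G n) 2 μ :=
      eLpNorm_le_eLpNorm_of_exponent_le one_le_two (hG2 n).aestronglyMeasurable
    have h2 : eLpNorm (G n) 2 μ
        ≤ (∑' k, ∫⁻ ω, ENNReal.ofReal (W k ω ^ 2) ∂μ) ^ (1/2 : ℝ) := by
      rw [eLpNorm_eq_lintegral_rpow_enorm_toReal (by norm_num) (by norm_num)]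
      have htwo : (2 : ENNReal).toReal = (2:ℝ) := by norm_num
      rw [htwo]
      exact ENNReal.rpow_le_rpow (hGsq_lin n) (by norm_num)
    rw [ENNReal.coe_toNNReal hVhalf]
    exact h1.trans h2
  -- a.s. convergence of the martingale
  have hGconv : ∀ᵐ ω ∂μ, ∃ c, Tendsto (fun n => G n ω) atTop (𝓝 c) := by
    filter_upwards [hGmart.submartingale.ae_tendsto_limitProcess hbdd] with ω hω
    exact ⟨_, hω⟩
  -- a.s. |W n| → 0
  have hWlim : ∀ᵐ ω ∂μ, Tendsto (fun n => |W n ω|) atTop (𝓝 0) := by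
    have hmeas : ∀ n, Measurable fun ω => ENNReal.ofReal (W n ω ^ 2) := fun n =>
      ENNReal.measurable_ofReal.comp ((hWm n).pow_const 2)
    have h1 : ∫⁻ ω, ∑' n, ENNReal.ofReal (W n ω ^ 2) ∂μ < ⊤ := by
      rw [lintegral_tsum fun n => (hmeas n).aemeasurable]
      exact hvar
    have h2 : ∀ᵐ ω ∂μ, ∑' n, ENNReal.ofReal (W n ω ^ 2) < ⊤ :=
      ae_lt_top (Measurable.ennreal_tsum hmeas) h1.ne
    filter_upwards [h2] with ω hω
    have hsum : Summable fun n => W n ω ^ 2 := by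
      have h3 := ENNReal.summable_toReal hω.ne
      have heq : (fun n => (ENNReal.ofReal (W n ω ^ 2)).toReal) = fun n => W n ω ^ 2 :=
        funext fun n => ENNReal.toReal_ofReal (sq_nonneg _)
      rwa [heq] at h3
    have h3 : Tendsto (fun n => W n ω ^ 2) atTop (𝓝 0) := hsum.tendsto_atTop_zero
    have h4 : Tendsto (fun n => Real.sqrt (W n ω ^ 2)) atTop (𝓝 (Real.sqrt 0)) :=
      (Real.continuous_sqrt.continuousAt).tendsto.comp h3
    simp_rw [Real.sqrt_sq_eq_abs] at h4
    rwa [Real.sqrt_zero] at h4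
  -- combine all a.e. statements
  have hball : ∀ᵐ ω ∂μ, ∀ n,
      |T n ω - xstar| ≤ max (α n ω) ((1 + β n ω) * |X n ω - xstar| - γ n ω) :=
    (ae_all_iff).mpr hbound
  filter_upwards [hα, hβ, hγ, hball, hGconv, hWlim] with ω hαω hβω hγω hbω hGω hWω
  obtain ⟨c, hc⟩ := hGω
  have hcauchy : CauchySeq fun n => ∑ k ∈ Finset.range n, U k ω := by
    have : (fun n => ∑ k ∈ Finset.range n, U k ω) = fun n => G n ω := by
      funext n; simp [hGdef]
    rw [this]
    exact hc.cauchySeq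
  have hdet := dvoretzky_det (fun n => |X n ω - xstar|) (fun n => U n ω) (fun n => α n ω)
      (fun n => β n ω) (fun n => γ n ω) (fun n => |W n ω|)
      (fun n => abs_nonneg _) (fun n => hβ0 n ω) (fun n => hγ0 n ω)
      hαω hβω hγω hcauchy hWω ?_
  · have h5 : Tendsto (fun n => X n ω - xstar) atTop (𝓝 0) := by
      rw [tendsto_zero_iff_norm_tendsto_zero]
      simpa [Real.norm_eq_abs] using hdet
    have h6 := h5.add_const xstar
    simpa using h6
  · intro n
    have hx : X (n + 1) ω - xstar = (T n ω - xstar) + W n ω := by rw [hrec n ω]; ring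
    calc |X (n + 1) ω - xstar| = |(T n ω - xstar) + W n ω| := by rw [hx]
      _ ≤ max (|T n ω - xstar| + H n ω * W n ω) |W n ω| := by
          have := abs_add_le_max_sign (T n ω - xstar) (W n ω)
          simpa [hHdef] using this
      _ ≤ max (max (α n ω + U n ω)
            ((1 + β n ω) * |X n ω - xstar| - γ n ω + U n ω)) |W n ω| := by
          refine max_le_max ?_ le_rfl
          have hmax : max (α n ω) ((1 + β n ω) * |X n ω - xstar| - γ n ω) + U n ω
              = max (α n ω + U n ω) ((1 + β n ω) * |X n ω - xstar| - γ n ω + U n ω) :=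
            (max_add_add_right _ _ _).symm
          rw [← hmax]
          exact add_le_add_left (hbω n) _
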